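/- Let X be a d-complex, −1 ≤ i ≤ k ≤ d, A ⊆ X(k) and 0 < η < 1. Then ‖S_η^i(A)‖ ≤ η^{−2^{k−i}} · ‖A‖. -/

import Mathlib

open Finset
open scoped symmDiff

noncomputable section

namespace HDExpansion

/-- The faces of cardinality `m` (i.e. of dimension `m - 1`) of a complex `X`. -/
def facesC (X : Finset (Finset ℕ)) (m : ℕ) : Finset (Finset ℕ) :=
  X.filter fun σ => σ.card = m

/-- `X` is a finite, pure, `d`-dimensional abstract simplicial complex:
it is nonempty, closed under subsets, and every face is contained in a face
of cardinality `d + 1`. -/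
def IsComplex (X : Finset (Finset ℕ)) (d : ℕ) : Prop :=
  X.Nonempty ∧ (∀ σ ∈ X, ∀ τ ⊆ σ, τ ∈ X) ∧
    ∀ σ ∈ X, ∃ F ∈ X, σ ⊆ F ∧ F.card = d + 1

/-- The weight of a face `σ` in the `d`-complex `X`:
`w(σ) = |{F ∈ X(d) : σ ⊆ F}| / (binom(d+1,|σ|)·|X(d)|)`. -/
def weightC (X : Finset (Finset ℕ)) (d : ℕ) (σ : Finset ℕ) : ℝ :=
  (((facesC X (d + 1)).filter fun F => σ ⊆ F).card : ℝ) /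
    (((d + 1).choose σ.card * (facesC X (d + 1)).card : ℕ) : ℝ)

/-- The norm of a cochain: `‖A‖ = Σ_{σ∈A} w(σ)`. -/
def normC (X : Finset (Finset ℕ)) (d : ℕ) (A : Finset (Finset ℕ)) : ℝ :=
  ∑ σ ∈ A, weightC X d σ

/-- The coboundary map, sending a cochain of faces of cardinality `m`
(dimension `m-1`) to the set of faces of cardinality `m+1` containing an odd
number of its elements. -/
def cobC (X : Finset (Finset ℕ)) (m : ℕ) (A : Finset (Finset ℕ)) : Finset (Finset ℕ) :=
  (facesC X (m + 1)).filter fun τ => (A.filter fun σ => σ ⊆ τ).card % 2 = 1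

/-- `A` (a cochain of faces of cardinality `m`, i.e. dimension `m-1`) is a
coboundary: `A ∈ B^{m-1}`. -/
def IsCobound (X : Finset (Finset ℕ)) (m : ℕ) (A : Finset (Finset ℕ)) : Prop :=
  ∃ γ ⊆ facesC X (m - 1), cobC X (m - 1) γ = A

/-- `A` (a cochain of faces of cardinality `m`, i.e. dimension `m-1`) is a
cocycle: `A ∈ Z^{m-1}`. -/
def IsCocycle (X : Finset (Finset ℕ)) (m : ℕ) (A : Finset (Finset ℕ)) : Prop :=
  A ⊆ facesC X m ∧ cobC X m A = ∅

/-- `min_{b ∈ B^{m-1}} ‖A + b‖` (cochain sum is symmetric difference `∆`). -/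
def distB (X : Finset (Finset ℕ)) (d m : ℕ) (A : Finset (Finset ℕ)) : ℝ :=
  sInf {r : ℝ | ∃ b, IsCobound X m b ∧ r = normC X d (A ∆ b)}

/-- `min_{z ∈ Z^{m-1}} ‖A + z‖` (cochain sum is symmetric difference `∆`). -/
def distZ (X : Finset (Finset ℕ)) (d m : ℕ) (A : Finset (Finset ℕ)) : ℝ :=
  sInf {r : ℝ | ∃ z, IsCocycle X m z ∧ r = normC X d (A ∆ z)}

/-- The link `X_σ = {τ : σ ∩ τ = ∅, σ ∪ τ ∈ X}`. -/
def link (X : Finset (Finset ℕ)) (σ : Finset ℕ) : Finset (Finset ℕ) :=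
  (X.filter fun ρ => σ ⊆ ρ).image fun ρ => ρ \ σ

/-- The localization `I_σ(A) = {τ ∈ X_σ : τ ∪ σ ∈ A}`. -/
def locF (σ : Finset ℕ) (A : Finset (Finset ℕ)) : Finset (Finset ℕ) :=
  (A.filter fun ρ => σ ⊆ ρ).image fun ρ => ρ \ σ

/-- The lifting `I^σ(A) = {τ ∪ σ : τ ∈ A}`. -/
def liftF (σ : Finset ℕ) (A : Finset (Finset ℕ)) : Finset (Finset ℕ) :=
  A.image fun τ => τ ∪ σ

/-- A cochain of faces of cardinality `m` is minimal if `‖A‖ ≤ ‖A + b‖` for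
every coboundary `b`. -/
def IsMinimal (Y : Finset (Finset ℕ)) (dY m : ℕ) (A : Finset (Finset ℕ)) : Prop :=
  ∀ b, IsCobound Y m b → normC Y dY A ≤ normC Y dY (A ∆ b)

/-- A cochain of faces of cardinality `m` is locally minimal if all its
localizations to links of nonempty faces are minimal. -/
def IsLocallyMinimal (X : Finset (Finset ℕ)) (d m : ℕ) (A : Finset (Finset ℕ)) : Prop :=
  ∀ σ ∈ X, σ ≠ ∅ → IsMinimal (link X σ) (d - σ.card) (m - σ.card) (locF σ A)

/-- `Y` (a `dY`-complex) is a `β`-coboundary expander: for every dimension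
`k = m - 1` with `0 ≤ k ≤ dY - 1` and every `k`-cochain `A ∉ B^k`,
`‖δA‖ ≥ β · min_{b ∈ B^k} ‖A+b‖`. -/
def CobExpander (Y : Finset (Finset ℕ)) (dY : ℕ) (β : ℝ) : Prop :=
  ∀ m : ℕ, 1 ≤ m → m ≤ dY → ∀ A ⊆ facesC Y m, ¬ IsCobound Y m A →
    β * distB Y dY m A ≤ normC Y dY (cobC Y m A)

/-- `E(A,A)`: the edges of `Y` with both vertices in the vertex set `A`
(vertices are identified with singleton faces). -/
def edgesIn (Y : Finset (Finset ℕ)) (A : Finset (Finset ℕ)) : Finset (Finset ℕ) :=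
  (facesC Y 2).filter fun e => ∀ v ∈ e, ({v} : Finset ℕ) ∈ A

/-- `Y` (a `dY`-complex) is an `α`-skeleton expander. -/
def SkelExpander (Y : Finset (Finset ℕ)) (dY : ℕ) (α : ℝ) : Prop :=
  ∀ A ⊆ facesC Y 1, normC Y dY (edgesIn Y A) ≤ 4 * (normC Y dY A ^ 2 + α * normC Y dY A)

/-- The `m`-skeleton of a complex (all faces of dimension at most `m`). -/
def skeleton (X : Finset (Finset ℕ)) (m : ℕ) : Finset (Finset ℕ) :=
  X.filter fun σ => σ.card ≤ m + 1

open scoped Classical in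
/-- `fatD X d kc η A j` is the set of fat faces `S_η^{k-j}(A)` where `kc = k+1`
is the cardinality of the faces of `A` (downward induction on `j`). -/
def fatD (X : Finset (Finset ℕ)) (d kc : ℕ) (η : ℝ) (A : Finset (Finset ℕ)) :
    ℕ → Finset (Finset ℕ)
  | 0 => A
  | j + 1 =>
    (facesC X (kc - (j + 1))).filter fun σ =>
      η ^ 2 ^ j ≤ normC (link X σ) (d - σ.card) (locF σ (fatD X d kc η A j))

/-- The fat faces `S_η^i(A)` of dimension `i` (with `-1 ≤ i ≤ k`), for a
`k`-dimensional cochain `A` of the `d`-complex `X`. -/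
def fatS (X : Finset (Finset ℕ)) (d k : ℕ) (η : ℝ) (A : Finset (Finset ℕ)) (i : ℤ) :
    Finset (Finset ℕ) :=
  fatD X d (k + 1) η A ((k : ℤ) - i).toNat

open scoped Classical in
/-- The fat ladders `L_η(A,σ)` sitting on a fat `i`-face `σ`. -/
def ladderL (X : Finset (Finset ℕ)) (d k : ℕ) (η : ℝ) (A : Finset (Finset ℕ))
    (i : ℤ) (σ : Finset ℕ) : Finset (Finset ℕ) :=
  A.filter fun t => ∃ c : ℤ → Finset ℕ, c i = σ ∧ c (k : ℤ) = t ∧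
    (∀ j : ℤ, i ≤ j → j ≤ (k : ℤ) → c j ∈ fatS X d k η A j) ∧
    (∀ j : ℤ, i ≤ j → j < (k : ℤ) → c j ⊆ c (j + 1))

/-- The `i`-fat-ladders `L_η(A,i) = ⋃_{σ ∈ S_η^i(A)} L_η(A,σ)`. -/
def ladderAll (X : Finset (Finset ℕ)) (d k : ℕ) (η : ℝ) (A : Finset (Finset ℕ))
    (i : ℤ) : Finset (Finset ℕ) :=
  (fatS X d k η A i).biUnion fun σ => ladderL X d k η A i σ

open scoped Classical in
/-- The degenerate faces `Υ_η(A)`: the `(k+1)`-dimensional faces containing a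
dead-end, i.e. two equal-dimensional fat faces whose intersection is a
codimension-1 non-fat face. -/
def UpsilonF (X : Finset (Finset ℕ)) (d k : ℕ) (η : ℝ) (A : Finset (Finset ℕ)) :
    Finset (Finset ℕ) :=
  (facesC X (k + 2)).filter fun p => ∃ i : ℤ, 0 ≤ i ∧ i ≤ (k : ℤ) ∧
    ∃ σ ∈ fatS X d k η A i, ∃ σ' ∈ fatS X d k η A i,
      σ ⊆ p ∧ σ' ⊆ p ∧ σ'.card = σ.card ∧ (σ ∩ σ').card + 1 = σ.card ∧
      σ ∩ σ' ∉ fatS X d k η A (i - 1)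


lemma weightC_nonneg (X : Finset (Finset ℕ)) (d : ℕ) (σ : Finset ℕ) :
    0 ≤ weightC X d σ :=
  div_nonneg (by positivity) (by positivity)

lemma normC_nonneg (X : Finset (Finset ℕ)) (d : ℕ) (A : Finset (Finset ℕ)) :
    0 ≤ normC X d A :=
  Finset.sum_nonneg fun _ _ => weightC_nonneg _ _ _

lemma card_facesC_link_filter (X : Finset (Finset ℕ)) (σ ρ : Finset ℕ)
    (hd : Disjoint σ ρ) (c : ℕ) :
    ((facesC (link X σ) c).filter fun F' => ρ ⊆ F').card
      = ((facesC X (c + σ.card)).filter fun F => σ ∪ ρ ⊆ F).card := by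
  classical
  symm
  apply Finset.card_bij (fun F _ => F \ σ)
  · intro F hF
    simp only [facesC, link, Finset.mem_filter, Finset.mem_image] at hF ⊢
    obtain ⟨⟨hFX, hFcard⟩, hsub⟩ := hF
    have hσF : σ ⊆ F := (Finset.union_subset_iff.mp hsub).1
    have hρF : ρ ⊆ F := (Finset.union_subset_iff.mp hsub).2
    refine ⟨⟨⟨F, ⟨⟨hFX, hσF⟩, rfl⟩⟩, ?_⟩, ?_⟩
    · rw [Finset.card_sdiff_of_subset hσF, hFcard]; omega
    · exact Finset.subset_sdiff.mpr ⟨hρF, hd.symm⟩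
  · intro F1 h1 F2 h2 heq
    simp only [facesC, Finset.mem_filter] at h1 h2
    have hσ1 : σ ⊆ F1 := (Finset.union_subset_iff.mp h1.2).1
    have hσ2 : σ ⊆ F2 := (Finset.union_subset_iff.mp h2.2).1
    have := congrArg (fun s => s ∪ σ) heq
    simpa [Finset.sdiff_union_of_subset hσ1, Finset.sdiff_union_of_subset hσ2] using this
  · intro F' hF'
    simp only [facesC, link, Finset.mem_filter, Finset.mem_image] at hF'
    obtain ⟨⟨⟨F, ⟨⟨hFX, hσF⟩, hFeq⟩⟩, hcard⟩, hρ⟩ := hF'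
    refine ⟨F, ?_, hFeq⟩
    simp only [facesC, Finset.mem_filter]
    refine ⟨⟨hFX, ?_⟩, Finset.union_subset hσF ?_⟩
    · have := Finset.card_sdiff_add_card_eq_card hσF
      rw [hFeq] at this; omega
    · exact (Finset.subset_sdiff.mp (hFeq ▸ hρ)).1

lemma weight_prod_eq (X : Finset (Finset ℕ)) (d m : ℕ) (hm : m ≤ d)
    (σ τ : Finset ℕ) (hστ : σ ⊆ τ) (hσ : σ.card = m) (hτ : τ.card = m + 1) :
    weightC X d σ * weightC (link X σ) (d - m) (τ \ σ)
      = (((facesC X (d + 1)).filter fun F => τ ⊆ F).card : ℝ)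
        / (((d + 1).choose m * (d - m + 1) * (facesC X (d + 1)).card : ℕ) : ℝ) := by
  classical
  obtain ⟨e, rfl⟩ : ∃ e, d = m + e := ⟨d - m, by omega⟩
  have hde : m + e - m = e := by omega
  rw [hde]
  have hcard_sdiff : (τ \ σ).card = 1 := by
    rw [Finset.card_sdiff_of_subset hστ, hτ, hσ]; omega
  have hdm : e + 1 + σ.card = m + e + 1 := by omega
  have hdisj : Disjoint σ (τ \ σ) := Finset.disjoint_sdiff
  have hnum : ((facesC (link X σ) (e + 1)).filter fun F' => τ \ σ ⊆ F').card
      = ((facesC X (m + e + 1)).filter fun F => τ ⊆ F).card := by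
    rw [card_facesC_link_filter X σ (τ \ σ) hdisj (e + 1), hdm,
      Finset.union_sdiff_of_subset hστ]
  have hden : (facesC (link X σ) (e + 1)).card
      = ((facesC X (m + e + 1)).filter fun F => σ ⊆ F).card := by
    have := card_facesC_link_filter X σ ∅ (Finset.disjoint_empty_right σ) (e + 1)
    simpa [hdm] using this
  set Dσ : ℕ := ((facesC X (m + e + 1)).filter fun F => σ ⊆ F).card with hDσ
  set Dτ : ℕ := ((facesC X (m + e + 1)).filter fun F => τ ⊆ F).card with hDτ
  set N : ℕ := (facesC X (m + e + 1)).card with hN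
  have hW2 : weightC (link X σ) e (τ \ σ)
      = (Dτ : ℝ) / (((e + 1) * Dσ : ℕ) : ℝ) := by
    rw [weightC, hcard_sdiff, hnum, hden, Nat.choose_one_right]
  have hW1 : weightC X (m + e) σ
      = (Dσ : ℝ) / ((((m + e + 1).choose m) * N : ℕ) : ℝ) := by
    rw [weightC, hσ]
  rw [hW1, hW2]
  have hτσ : Dτ ≤ Dσ := by
    apply Finset.card_le_card
    exact Finset.monotone_filter_right _ (fun F _ hF => hστ.trans hF)
  rcases Nat.eq_zero_or_pos Dσ with h0 | hpos
  · have hτ0 : Dτ = 0 := by omega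
    rw [h0, hτ0]
    norm_num
  · have h1 : ((m + e + 1).choose m : ℝ) ≠ 0 := by
      have : 0 < (m + e + 1).choose m := Nat.choose_pos (by omega)
      positivity
    have h3 : (Dσ : ℝ) ≠ 0 := Nat.cast_ne_zero.mpr hpos.ne'
    rcases Nat.eq_zero_or_pos N with hN0 | hNpos
    · exfalso
      have : Dσ ≤ N := Finset.card_le_card (Finset.filter_subset _ _)
      omega
    have h4 : (N : ℝ) ≠ 0 := Nat.cast_ne_zero.mpr hNpos.ne'
    push_cast
    field_simp

lemma sum_powersetCard_weight (X : Finset (Finset ℕ)) (d m : ℕ) (hm : m ≤ d)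
    (τ : Finset ℕ) (hτ : τ.card = m + 1) :
    ∑ σ ∈ τ.powersetCard m,
        weightC X d σ * weightC (link X σ) (d - σ.card) (τ \ σ)
      = weightC X d τ := by
  classical
  set Dτ : ℕ := ((facesC X (d + 1)).filter fun F => τ ⊆ F).card with hDτ
  set N : ℕ := (facesC X (d + 1)).card with hN
  have hconst : ∀ σ ∈ τ.powersetCard m,
      weightC X d σ * weightC (link X σ) (d - σ.card) (τ \ σ)
        = (Dτ : ℝ) / (((d + 1).choose m * (d - m + 1) * N : ℕ) : ℝ) := by
    intro σ hσ
    rw [Finset.mem_powersetCard] at hσ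
    rw [hσ.2]
    exact weight_prod_eq X d m hm σ τ hσ.1 hσ.2 hτ
  rw [Finset.sum_congr rfl hconst, Finset.sum_const, Finset.card_powersetCard, hτ,
    Nat.choose_succ_self_right]
  rw [weightC, hτ, ← hDτ, ← hN]
  obtain ⟨e, rfl⟩ : ∃ e, d = m + e := ⟨d - m, by omega⟩
  have hde : m + e - m = e := by omega
  rw [hde]
  have hkey : (m + e + 1).choose (m + 1) * (m + 1) = (m + e + 1).choose m * (e + 1) := by
    have h := Nat.choose_succ_right_eq (m + e + 1) m
    rw [h]; congr 1; omega
  have h1 : 0 < (m + e + 1).choose m := Nat.choose_pos (by omega)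
  have h2 : 0 < (m + e + 1).choose (m + 1) := Nat.choose_pos (by omega)
  rcases Nat.eq_zero_or_pos N with hN0 | hNpos
  · rw [hN0]; norm_num
  · have h4 : (N : ℝ) ≠ 0 := Nat.cast_ne_zero.mpr hNpos.ne'
    have h5 : ((m + e + 1).choose m : ℝ) ≠ 0 := Nat.cast_ne_zero.mpr h1.ne'
    have h6 : ((m + e + 1).choose (m + 1) : ℝ) ≠ 0 := Nat.cast_ne_zero.mpr h2.ne'
    have hkeyR : ((m + e + 1).choose (m + 1) : ℝ) * (m + 1)
        = ((m + e + 1).choose m : ℝ) * (e + 1) := by exact_mod_cast hkey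
    rw [nsmul_eq_mul]
    push_cast
    field_simp
    linear_combination (↑Dτ : ℝ) * hkeyR

lemma normC_locF (Y : Finset (Finset ℕ)) (dY : ℕ) (σ : Finset ℕ) (B : Finset (Finset ℕ)) :
    normC Y dY (locF σ B) = ∑ τ ∈ B.filter fun ρ => σ ⊆ ρ, weightC Y dY (τ \ σ) := by
  classical
  rw [normC, locF, Finset.sum_image]
  intro τ1 h1 τ2 h2 heq
  simp only [Finset.coe_filter, Finset.mem_coe, Finset.mem_filter, Set.mem_setOf_eq] at h1 h2
  have := congrArg (fun s => s ∪ σ) heq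
  simpa [Finset.sdiff_union_of_subset h1.2, Finset.sdiff_union_of_subset h2.2] using this

lemma sum_weight_loc_le (X : Finset (Finset ℕ)) (d m : ℕ) (hm : m ≤ d)
    (S B : Finset (Finset ℕ)) (hS : ∀ σ ∈ S, σ.card = m)
    (hB : ∀ τ ∈ B, τ.card = m + 1) :
    ∑ σ ∈ S, weightC X d σ * normC (link X σ) (d - σ.card) (locF σ B)
      ≤ normC X d B := by
  classical
  have hstep : ∀ σ ∈ S, weightC X d σ * normC (link X σ) (d - σ.card) (locF σ B)
      = ∑ τ ∈ B, if σ ⊆ τ then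
          weightC X d σ * weightC (link X σ) (d - σ.card) (τ \ σ) else 0 := by
    intro σ _
    rw [normC_locF, Finset.mul_sum, ← Finset.sum_filter]
  rw [Finset.sum_congr rfl hstep, Finset.sum_comm]
  apply Finset.sum_le_sum
  intro τ hτ
  rw [← Finset.sum_filter]
  calc ∑ σ ∈ S.filter (· ⊆ τ),
        weightC X d σ * weightC (link X σ) (d - σ.card) (τ \ σ)
      ≤ ∑ σ ∈ τ.powersetCard m,
          weightC X d σ * weightC (link X σ) (d - σ.card) (τ \ σ) := by
        apply Finset.sum_le_sum_of_subset_of_nonneg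
        · intro σ hσ
          simp only [Finset.mem_filter] at hσ
          exact Finset.mem_powersetCard.mpr ⟨hσ.2, hS σ hσ.1⟩
        · intro σ _ _
          exact mul_nonneg (weightC_nonneg _ _ _) (weightC_nonneg _ _ _)
    _ = weightC X d τ := sum_powersetCard_weight X d m hm τ (hB τ hτ)

lemma fatD_subset (X : Finset (Finset ℕ)) (d k : ℕ) (η : ℝ) (A : Finset (Finset ℕ))
    (hA : A ⊆ facesC X (k + 1)) : ∀ j, fatD X d (k + 1) η A j ⊆ facesC X (k + 1 - j)
  | 0 => hA
  | j + 1 => by rw [fatD]; exact Finset.filter_subset _ _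

lemma fatD_norm_le (X : Finset (Finset ℕ)) (d k : ℕ) (hk : k ≤ d)
    (A : Finset (Finset ℕ)) (hA : A ⊆ facesC X (k + 1))
    (η : ℝ) (hη0 : 0 < η) (hη1 : η ≤ 1) :
    ∀ j, j ≤ k + 1 →
      normC X d (fatD X d (k + 1) η A j) ≤ (η ^ 2 ^ j)⁻¹ * normC X d A
  | 0, _ => by
    rw [fatD, pow_zero, pow_one]
    have h1 : (1:ℝ) ≤ η⁻¹ := by
      have h2 := inv_pos.mpr hη0
      nlinarith [mul_inv_cancel₀ (ne_of_gt hη0)]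
    nlinarith [normC_nonneg X d A]
  | j + 1, hj => by
    have hIH := fatD_norm_le X d k hk A hA η hη0 hη1 j (by omega)
    classical
    set B := fatD X d (k + 1) η A j with hB
    have hBsub : B ⊆ facesC X (k + 1 - j) := fatD_subset X d k η A hA j
    have hfd : fatD X d (k + 1) η A (j + 1)
        = (facesC X (k + 1 - (j + 1))).filter fun σ =>
            η ^ 2 ^ j ≤ normC (link X σ) (d - σ.card) (locF σ B) := by
      rw [fatD]
    set S := fatD X d (k + 1) η A (j + 1) with hSdef
    have hε : (0:ℝ) < η ^ 2 ^ j := pow_pos hη0 _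
    have hεinv : (0:ℝ) ≤ (η ^ 2 ^ j)⁻¹ := le_of_lt (inv_pos.mpr hε)
    have step1 : normC X d S ≤ (η ^ 2 ^ j)⁻¹ *
        ∑ σ ∈ S, weightC X d σ * normC (link X σ) (d - σ.card) (locF σ B) := by
      rw [normC, Finset.mul_sum]
      apply Finset.sum_le_sum
      intro σ hσ
      have hσ' : η ^ 2 ^ j ≤ normC (link X σ) (d - σ.card) (locF σ B) := by
        rw [hfd] at hσ; exact (Finset.mem_filter.mp hσ).2
      have hw := weightC_nonneg X d σ
      have h1 : (1:ℝ) ≤ (η ^ 2 ^ j)⁻¹ * normC (link X σ) (d - σ.card) (locF σ B) := by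
        have := mul_le_mul_of_nonneg_left hσ' hεinv
        rwa [inv_mul_cancel₀ (ne_of_gt hε)] at this
      calc weightC X d σ = weightC X d σ * 1 := (mul_one _).symm
        _ ≤ weightC X d σ *
            ((η ^ 2 ^ j)⁻¹ * normC (link X σ) (d - σ.card) (locF σ B)) :=
          mul_le_mul_of_nonneg_left h1 hw
        _ = (η ^ 2 ^ j)⁻¹ *
            (weightC X d σ * normC (link X σ) (d - σ.card) (locF σ B)) := by ring
    have hm : k - j ≤ d := le_trans (Nat.sub_le _ _) hk
    have hS' : ∀ σ ∈ S, σ.card = k - j := by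
      intro σ hσ
      rw [hfd] at hσ
      have h := (Finset.mem_filter.mp hσ).1
      simp only [facesC, Finset.mem_filter] at h
      omega
    have hB' : ∀ τ ∈ B, τ.card = (k - j) + 1 := by
      intro τ hτ
      have h := hBsub hτ
      simp only [facesC, Finset.mem_filter] at h
      omega
    have step2 := sum_weight_loc_le X d (k - j) hm S B hS' hB'
    have hpow : (η ^ 2 ^ (j + 1))⁻¹ = (η ^ 2 ^ j)⁻¹ * (η ^ 2 ^ j)⁻¹ := by
      rw [pow_succ, pow_mul, sq, mul_inv]
    calc normC X d S ≤ (η ^ 2 ^ j)⁻¹ *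
          ∑ σ ∈ S, weightC X d σ * normC (link X σ) (d - σ.card) (locF σ B) := step1
      _ ≤ (η ^ 2 ^ j)⁻¹ * normC X d B := mul_le_mul_of_nonneg_left step2 hεinv
      _ ≤ (η ^ 2 ^ j)⁻¹ * ((η ^ 2 ^ j)⁻¹ * normC X d A) :=
          mul_le_mul_of_nonneg_left hIH hεinv
      _ = (η ^ 2 ^ (j + 1))⁻¹ * normC X d A := by rw [hpow]; ring


/-- `‖S_η^i(A)‖ ≤ η^{-2^{k-i}} · ‖A‖` for `-1 ≤ i ≤ k`. -/
theorem statement_10 (d k : ℕ) (hk : k ≤ d) (X : Finset (Finset ℕ)) (hX : IsComplex X d)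
    (A : Finset (Finset ℕ)) (hA : A ⊆ facesC X (k + 1))
    (η : ℝ) (hη0 : 0 < η) (hη1 : η < 1)
    (i : ℤ) (hi : -1 ≤ i) (hik : i ≤ (k : ℤ)) :
    normC X d (fatS X d k η A i) ≤ (η ^ 2 ^ ((k : ℤ) - i).toNat)⁻¹ * normC X d A := by
  have hj : ((k : ℤ) - i).toNat ≤ k + 1 := by omega
  rw [fatS]
  exact fatD_norm_le X d k hk A hA η hη0 (le_of_lt hη1) _ hj

end HDExpansion
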